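/- Let g be a Lie conformal algebra and M a left g-module. Then E := g ⊕ M with the operation (x+u) ∘_λ (y+v) := [x_λ y] + x▷_λ v is a left Leibniz conformal algebra (the hemisemidirect product g ⋉_H M). -/

import Mathlib

/-!
Core framework for λ-bracket (conformal) algebra over ℂ[∂].

`CD = ℂ[∂]`.  For a `ℂ[∂]`-module `M`, `PM1 M = M[λ]` is the polynomial module in one
variable λ; it is a module over `A1 = ℂ[∂][λ]` (where `Polynomial.X : A1` is λ and
`Polynomial.C dd : A1` is ∂ acting on coefficients).  Iterating gives `PM2 M = M[λ₁,λ₂]`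
(a module over `A2 = ℂ[∂][λ₁][λ₂]`, where `vl = λ₁` is the inner variable and `vm = λ₂`
the outer one) and `PM3 M = M[λ₁,λ₂,λ₃]` (over `A3`, variables `u1, u2, u3`).

`lift1 w F p` evaluates a one-variable polynomial `p = Σ aₙ λⁿ` as `Σ wⁿ • F aₙ`:
this is how expressions like `[x_λ [y_μ z]]`, substitutions `λ ↦ -∂-λ`, `λ ↦ λ+μ`, etc.
are expressed.  Similarly `lift2`, `lift3`.
-/

set_option maxSynthPendingDepth 5

noncomputable section
open Polynomial

abbrev CD : Type := Polynomial ℂ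
abbrev A1 : Type := Polynomial CD
abbrev A2 : Type := Polynomial A1
abbrev A3 : Type := Polynomial A2

/-- The operator ∂, i.e. the variable of `ℂ[∂]`. -/
def dd : CD := Polynomial.X

abbrev PM1 (M : Type) [AddCommGroup M] [Module CD M] : Type := PolynomialModule CD M
abbrev PM2 (M : Type) [AddCommGroup M] [Module CD M] : Type := PolynomialModule A1 (PM1 M)
abbrev PM3 (M : Type) [AddCommGroup M] [Module CD M] : Type := PolynomialModule A2 (PM2 M)

namespace CLC

variable {M S : Type} [AddCommGroup M] [Module CD M] [AddCommGroup S] [Module CD S]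

/-- `c ∈ ℂ` as an element of `ℂ[∂]`. -/
def cC (c : ℂ) : CD := Polynomial.C c
/-- `c ∈ ℂ` as a scalar for `M[λ]`. -/
def cC1 (c : ℂ) : A1 := Polynomial.C (Polynomial.C c)
/-- `c ∈ ℂ` as a scalar for `M[λ₁,λ₂]`. -/
def cC2 (c : ℂ) : A2 := Polynomial.C (Polynomial.C (Polynomial.C c))

/-- λ₁ as a scalar for `M[λ₁,λ₂]`. -/
def vl : A2 := Polynomial.C Polynomial.X
/-- λ₂ as a scalar for `M[λ₁,λ₂]`. -/
def vm : A2 := Polynomial.X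
/-- ∂ as a scalar for `M[λ₁,λ₂]`. -/
def vd : A2 := Polynomial.C (Polynomial.C dd)

/-- λ₁ as a scalar for `M[λ₁,λ₂,λ₃]`. -/
def u1 : A3 := Polynomial.C (Polynomial.C Polynomial.X)
/-- λ₂ as a scalar for `M[λ₁,λ₂,λ₃]`. -/
def u2 : A3 := Polynomial.C Polynomial.X
/-- λ₃ as a scalar for `M[λ₁,λ₂,λ₃]`. -/
def u3 : A3 := Polynomial.X
/-- ∂ as a scalar for `M[λ₁,λ₂,λ₃]`. -/
def ud : A3 := Polynomial.C (Polynomial.C (Polynomial.C dd))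

/-- `m`, as a constant polynomial in `M[λ]`. -/
def base1 (a : M) : PM1 M := PolynomialModule.single CD 0 a
/-- `m`, as a constant polynomial in `M[λ₁,λ₂]`. -/
def base2 (a : M) : PM2 M := PolynomialModule.single A1 0 (base1 a)
/-- `m`, as a constant polynomial in `M[λ₁,λ₂,λ₃]`. -/
def base3 (a : M) : PM3 M := PolynomialModule.single A2 0 (base2 a)

/-- Evaluation of a one-variable polynomial `Σ aₙ λⁿ` as `Σ wⁿ • F aₙ`. -/
def lift1 {B T : Type} [CommRing B] [AddCommGroup T] [Module B T]
    (w : B) (F : S → T) (p : PM1 S) : T :=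
  p.coeff.sum fun n a => w ^ n • F a

/-- Evaluation of a two-variable polynomial, with `w1` substituted for the inner
variable and `w2` for the outer one. -/
def lift2 {B T : Type} [CommRing B] [AddCommGroup T] [Module B T]
    (w1 w2 : B) (F : S → T) (q : PM2 S) : T :=
  q.coeff.sum fun n r => w2 ^ n • lift1 w1 F r

/-- Evaluation of a three-variable polynomial. -/
def lift3 {B T : Type} [CommRing B] [AddCommGroup T] [Module B T]
    (w1 w2 w3 : B) (F : S → T) (q : PM3 S) : T :=
  q.coeff.sum fun n r => w3 ^ n • lift2 w1 w2 F r

/-- The substitution `λ ↦ -∂-λ` on `M[λ]`. -/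
def negShift : PM1 M → PM1 M :=
  lift1 (-(Polynomial.C dd) - Polynomial.X : A1) base1

/-- A `ℂ[∂]`-linear map applied coefficientwise on `M[λ]`. -/
def map1 (f : S →ₗ[CD] M) : PM1 S → PM1 M :=
  lift1 (Polynomial.X : A1) (fun a => base1 (f a))

/-- A `ℂ[∂]`-linear map applied coefficientwise on `M[λ₁,λ₂]`. -/
def map2 (f : S →ₗ[CD] M) : PM2 S → PM2 M :=
  lift2 vl vm (fun a => base2 (f a))

/-- A `ℂ[∂]`-linear map applied coefficientwise on `M[λ₁,λ₂,λ₃]`. -/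
def map3 (f : S →ₗ[CD] M) : PM3 S → PM3 M :=
  lift3 u1 u2 u3 (fun a => base3 (f a))


variable {R M : Type} [AddCommGroup R] [Module CD R] [AddCommGroup M] [Module CD M]

/-- A conformal algebra structure: a ℂ-bilinear λ-product `R × R → R[λ]`
satisfying conformal sesquilinearity. -/
structure ConfBracket (R : Type) [AddCommGroup R] [Module CD R] where
  br : R → R → PM1 R
  add_left : ∀ x y z, br (x + y) z = br x z + br y z
  add_right : ∀ x y z, br x (y + z) = br x y + br x z
  smulC_left : ∀ (c : ℂ) (x y : R), br (cC c • x) y = cC1 c • br x y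
  smulC_right : ∀ (c : ℂ) (x y : R), br x (cC c • y) = cC1 c • br x y
  sesq_left : ∀ x y, br (dd • x) y = -((Polynomial.X : A1) • br x y)
  sesq_right : ∀ x y, br x (dd • y) = (Polynomial.C dd + Polynomial.X : A1) • br x y

/-- `x ∘_{λ₁} (y ∘_{λ₂} z)` as an element of `R[λ₁,λ₂]`. -/
def jT1 (br : R → R → PM1 R) (x y z : R) : PM2 R :=
  lift1 vm (fun a => lift1 vl base2 (br x a)) (br y z)

/-- `(x ∘_{λ₁} y) ∘_{λ₁+λ₂} z` as an element of `R[λ₁,λ₂]`. -/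
def jT2 (br : R → R → PM1 R) (x y z : R) : PM2 R :=
  lift1 vl (fun a => lift1 (vl + vm) base2 (br a z)) (br x y)

/-- `y ∘_{λ₂} (x ∘_{λ₁} z)` as an element of `R[λ₁,λ₂]`. -/
def jT3 (br : R → R → PM1 R) (x y z : R) : PM2 R :=
  lift1 vl (fun a => lift1 vm base2 (br y a)) (br x z)

/-- `(x ∘_{λ₁} z) ∘_{-∂-λ₂} y` as an element of `R[λ₁,λ₂]`. -/
def jT4 (br : R → R → PM1 R) (x y z : R) : PM2 R :=
  lift1 vl (fun a => lift1 (-vd - vm) base2 (br a y)) (br x z)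

namespace ConfBracket

variable (B : ConfBracket R)

/-- Skew-symmetry `[x_λ y] = -[y_{-∂-λ} x]`. -/
def Skew : Prop := ∀ x y, B.br x y = - negShift (B.br y x)

/-- The Jacobi identity `[x_λ [y_μ z]] = [[x_λ y]_{λ+μ} z] + [y_μ [x_λ z]]`. -/
def Jacobi : Prop := ∀ x y z, jT1 B.br x y z = jT2 B.br x y z + jT3 B.br x y z

/-- The left Leibniz identity `x∘_λ(y∘_μ z) = (x∘_λ y)∘_{λ+μ} z + y∘_μ(x∘_λ z)`. -/
def LeftLeibniz : Prop := ∀ x y z, jT1 B.br x y z = jT2 B.br x y z + jT3 B.br x y z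

/-- The right Leibniz identity `(x∘_λ y)∘_{λ+μ} z = x∘_λ(y∘_μ z) + (x∘_λ z)∘_{-∂-μ} y`. -/
def RightLeibniz : Prop := ∀ x y z, jT2 B.br x y z = jT1 B.br x y z + jT4 B.br x y z

/-- A Lie conformal algebra: skew-symmetric and satisfying the Jacobi identity. -/
def IsLie : Prop := B.Skew ∧ B.Jacobi

end ConfBracket

/-- A conformal left-action datum: a ℂ-bilinear map `R × M → M[λ]` satisfying
conformal sesquilinearity. -/
structure ConfAction (R M : Type) [AddCommGroup R] [Module CD R]
    [AddCommGroup M] [Module CD M] where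
  act : R → M → PM1 M
  add_left : ∀ (x y : R) (v : M), act (x + y) v = act x v + act y v
  add_right : ∀ (x : R) (v w : M), act x (v + w) = act x v + act x w
  smulC_left : ∀ (c : ℂ) (x : R) (v : M), act (cC c • x) v = cC1 c • act x v
  smulC_right : ∀ (c : ℂ) (x : R) (v : M), act x (cC c • v) = cC1 c • act x v
  sesq_left : ∀ (x : R) (v : M), act (dd • x) v = -((Polynomial.X : A1) • act x v)
  sesq_right : ∀ (x : R) (v : M),
    act x (dd • v) = (Polynomial.C dd + Polynomial.X : A1) • act x v

/-- The left-module identity `[x_λ y] ▷_{λ+μ} v = x ▷_λ (y ▷_μ v) - y ▷_μ (x ▷_λ v)`. -/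
def IsLeftModule (B : ConfBracket R) (A : ConfAction R M) : Prop :=
  ∀ (x y : R) (v : M),
    lift1 vl (fun a => lift1 (vl + vm) base2 (A.act a v)) (B.br x y) =
      lift1 vm (fun m => lift1 vl base2 (A.act x m)) (A.act y v)
      - lift1 vl (fun m => lift1 vm base2 (A.act y m)) (A.act x v)

/-- A conformal right-action datum: a ℂ-bilinear map `M × R → M[λ]` satisfying
conformal sesquilinearity. -/
structure ConfRAction (R M : Type) [AddCommGroup R] [Module CD R]
    [AddCommGroup M] [Module CD M] where
  act : M → R → PM1 M
  add_left : ∀ (v w : M) (x : R), act (v + w) x = act v x + act w x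
  add_right : ∀ (v : M) (x y : R), act v (x + y) = act v x + act v y
  smulC_left : ∀ (c : ℂ) (v : M) (x : R), act (cC c • v) x = cC1 c • act v x
  smulC_right : ∀ (c : ℂ) (v : M) (x : R), act v (cC c • x) = cC1 c • act v x
  sesq_left : ∀ (v : M) (x : R), act (dd • v) x = -((Polynomial.X : A1) • act v x)
  sesq_right : ∀ (v : M) (x : R),
    act v (dd • x) = (Polynomial.C dd + Polynomial.X : A1) • act v x

/-- The right-module identity
`v ◁_μ [x_λ y] = (v ◁_μ x) ◁_{λ+μ} y - (v ◁_μ y) ◁_{-∂-λ} x`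
(here λ is the inner variable `vl` and μ the outer variable `vm`). -/
def IsRightModule (B : ConfBracket R) (A : ConfRAction R M) : Prop :=
  ∀ (x y : R) (v : M),
    lift1 vl (fun a => lift1 vm base2 (A.act v a)) (B.br x y) =
      lift1 vm (fun m => lift1 (vl + vm) base2 (A.act m y)) (A.act v x)
      - lift1 vm (fun m => lift1 (-vd - vl) base2 (A.act m x)) (A.act v y)

end CLC


section Aux
set_option linter.unusedSectionVars false
namespace CLC
variable {S S' M : Type} [AddCommGroup S] [Module CD S] [AddCommGroup S'] [Module CD S']
  [AddCommGroup M] [Module CD M]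
variable {Bk T : Type} [CommRing Bk] [AddCommGroup T] [Module Bk T]

lemma F0_of_add {F : S → T} (hF : ∀ a b, F (a + b) = F a + F b) : F 0 = 0 := by
  have h := hF 0 0
  rw [add_zero] at h
  exact (left_eq_add.mp h)

lemma lift1_zero (w : Bk) (F : S → T) : lift1 w F (0 : PM1 S) = 0 := by
  unfold lift1; rw [PolynomialModule.coeff_zero]; exact Finsupp.sum_zero_index

lemma lift1_single (w : Bk) (F : S → T) (hF0 : F 0 = 0) (n : ℕ) (a : S) :
    lift1 w F (PolynomialModule.single CD n a) = w ^ n • F a := by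
  unfold lift1; rw [PolynomialModule.coeff_single]; exact Finsupp.sum_single_index (by rw [hF0, smul_zero])

lemma lift1_add (w : Bk) (F : S → T) (hF : ∀ a b, F (a + b) = F a + F b)
    (p q : PM1 S) : lift1 w F (p + q) = lift1 w F p + lift1 w F q := by
  unfold lift1; rw [PolynomialModule.coeff_add]; exact Finsupp.sum_add_index' (fun n => by rw [F0_of_add hF, smul_zero])
    (fun n a b => by rw [hF, smul_add])

lemma lift1_congrF (w : Bk) {F G : S → T} (h : ∀ a, F a = G a) (p : PM1 S) :
    lift1 w F p = lift1 w G p := by unfold lift1; simp_rw [h]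

lemma lift1_funadd (w : Bk) (F G : S → T) (p : PM1 S) :
    lift1 w (fun a => F a + G a) p = lift1 w F p + lift1 w G p := by
  unfold lift1; simp_rw [smul_add]; exact Finsupp.sum_add

lemma lift1_funzero (w : Bk) (p : PM1 S) : lift1 w (fun _ : S => (0:T)) p = 0 := by
  unfold lift1; simp

lemma base1_add (a b : S) : base1 (a + b) = base1 a + base1 b := by
  unfold base1; exact PolynomialModule.single_add 0 a b

lemma base2_add (a b : S) : base2 (a + b) = base2 a + base2 b := by
  unfold base2; rw [base1_add, PolynomialModule.single_add]

lemma mapCD_smul (f : S →ₗ[CD] M) (a : A1) (q : PM1 S) :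
    PolynomialModule.map CD f (a • q) = a • PolynomialModule.map CD f q := by
  rw [PolynomialModule.map_smul, Algebra.algebraMap_self, Polynomial.map_id]

lemma map1_eq (f : S →ₗ[CD] M) (p : PM1 S) :
    map1 f p = PolynomialModule.map CD f p := by
  induction p using PolynomialModule.induction_linear with
  | zero => rw [map_zero]; exact lift1_zero _ _
  | add p q hp hq =>
      rw [map_add, ← hp, ← hq]
      exact lift1_add _ _ (fun a b => by rw [map_add, base1_add]) p q
  | single n a =>
      rw [PolynomialModule.map_single]
      show lift1 (Polynomial.X : A1) (fun a => base1 (f a)) _ = _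
      rw [lift1_single _ _ (by rw [map_zero]; unfold base1; rw [PolynomialModule.single_zero])]
      rw [Polynomial.X_pow_eq_monomial]
      unfold base1
      rw [PolynomialModule.monomial_smul_single, one_smul, add_zero]

def mapA1lin (f : S →ₗ[CD] M) : PM1 S →ₗ[A1] PM1 M where
  toFun := PolynomialModule.map CD f
  map_add' := map_add _
  map_smul' := fun a p => mapCD_smul f a p

def map2lin (f : S →ₗ[CD] M) : PM2 S →ₗ[A1] PM2 M :=
  PolynomialModule.map A1 (mapA1lin f)

instance instTowerPM1 : IsScalarTower A1 A1 (PM1 M) := ⟨fun a b m => mul_smul a b m⟩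

lemma map2lin_smul (f : S →ₗ[CD] M) (a : A2) (q : PM2 S) :
    map2lin f (a • q) = a • map2lin f q := by
  unfold map2lin
  rw [PolynomialModule.map_smul, Algebra.algebraMap_self, Polynomial.map_id]

lemma map2lin_base2 (f : S →ₗ[CD] M) (a : S) :
    map2lin f (base2 a) = base2 (f a) := by
  unfold map2lin base2 base1
  rw [PolynomialModule.map_single]
  show PolynomialModule.single A1 0 (PolynomialModule.map CD f _) = _
  rw [PolynomialModule.map_single]

lemma map2lin_lift1 (f : S →ₗ[CD] M) (w : A2) (F : S' → PM2 S) (p : PM1 S') :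
    map2lin f (lift1 w F p) = lift1 w (fun a => map2lin f (F a)) p := by
  unfold lift1
  rw [map_finsuppSum]
  exact Finsupp.sum_congr fun n _ => map2lin_smul f _ _

lemma lift1_mapCD (f : S →ₗ[CD] M) (w : Bk) (G : M → T)
    (hG : ∀ a b, G (a + b) = G a + G b) (p : PM1 S) :
    lift1 w G (PolynomialModule.map CD f p) = lift1 w (fun a => G (f a)) p := by
  induction p using PolynomialModule.induction_linear with
  | zero => rw [map_zero, lift1_zero, lift1_zero]
  | add p q hp hq =>
      rw [map_add, lift1_add w G hG, lift1_add w _ (fun a b => by rw [map_add, hG]), hp, hq]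
  | single n a =>
      rw [PolynomialModule.map_single, lift1_single w G (F0_of_add hG),
        lift1_single w _ (by rw [map_zero, F0_of_add hG])]

lemma lift1_base2_add (w : A2) (p q : PM1 S) :
    lift1 w base2 (p + q) = lift1 w base2 p + lift1 w base2 q :=
  lift1_add w base2 base2_add p q

lemma lift1_map_base2 (f : S →ₗ[CD] M) (w : A2) (p : PM1 S) :
    lift1 w base2 (PolynomialModule.map CD f p) = lift1 w (fun c => base2 (f c)) p :=
  lift1_mapCD f w base2 base2_add p

end CLC
end Aux

open CLC

/-- **Statement 12.** Let `g` be a Lie conformal algebra and `M` a left `g`-module.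
Then `E := g ⊕ M` with `(x+u) ∘_λ (y+v) := [x_λ y] + x ▷_λ v` is a left Leibniz
conformal algebra (the hemisemidirect product `g ⋉_H M`). -/
theorem hemisemidirect_product_is_leftLeibniz
    {g M : Type} [AddCommGroup g] [Module CD g] [AddCommGroup M] [Module CD M]
    (B : ConfBracket g) (hskew : B.Skew) (hjacobi : B.Jacobi)
    (A : ConfAction g M) (hmod : IsLeftModule B A) :
    ∃ E : ConfBracket (g × M),
      E.br = (fun p q =>
        map1 (LinearMap.inl CD g M) (B.br p.1 q.1) +
        map1 (LinearMap.inr CD g M) (A.act p.1 q.2)) ∧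
      E.LeftLeibniz := by
  have hbrz_l : ∀ s : g, B.br 0 s = 0 := fun s => F0_of_add (F := fun a => B.br a s) (fun a b => B.add_left a b s)
  have hbrz_r : ∀ s : g, B.br s 0 = 0 := fun s => F0_of_add (F := fun a => B.br s a) (B.add_right s)
  have hactz_l : ∀ v : M, A.act 0 v = 0 := fun v => F0_of_add (F := fun a => A.act a v) (fun a b => A.add_left a b v)
  have hactz_r : ∀ s : g, A.act s 0 = 0 := fun s => F0_of_add (F := fun a => A.act s a) (A.add_right s)
  refine ⟨{ br := fun p q =>
              map1 (LinearMap.inl CD g M) (B.br p.1 q.1) +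
              map1 (LinearMap.inr CD g M) (A.act p.1 q.2)
            add_left := ?_
            add_right := ?_
            smulC_left := ?_
            smulC_right := ?_
            sesq_left := ?_
            sesq_right := ?_ }, rfl, ?_⟩
  · intro p q r
    simp only [map1_eq, Prod.fst_add, B.add_left, A.add_left, map_add]
    abel
  · intro p q r
    simp only [map1_eq, Prod.fst_add, Prod.snd_add, B.add_right, A.add_right, map_add]
    abel
  · intro c p q
    simp only [map1_eq, Prod.smul_fst]
    rw [B.smulC_left, A.smulC_left, mapCD_smul, mapCD_smul, smul_add]
  · intro c p q
    simp only [map1_eq, Prod.smul_fst, Prod.smul_snd]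
    rw [B.smulC_right, A.smulC_right, mapCD_smul, mapCD_smul, smul_add]
  · intro p q
    simp only [map1_eq, Prod.smul_fst]
    rw [B.sesq_left, A.sesq_left, map_neg, map_neg, mapCD_smul, mapCD_smul, smul_add, neg_add]
  · intro p q
    simp only [map1_eq, Prod.smul_fst, Prod.smul_snd]
    rw [B.sesq_right, A.sesq_right, mapCD_smul, mapCD_smul, smul_add]
  · intro P Q Z
    have hjac2 := congrArg (⇑(map2lin (LinearMap.inl CD g M))) (hjacobi P.1 Q.1 Z.1)
    simp only [jT1, jT2, jT3, map_add, map2lin_lift1, map2lin_base2,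
      LinearMap.inl_apply] at hjac2
    have hmod2 := congrArg (⇑(map2lin (LinearMap.inr CD g M))) (hmod P.1 Q.1 Z.2)
    simp only [map_sub, map2lin_lift1, map2lin_base2, LinearMap.inr_apply] at hmod2
    simp only [jT1, jT2, jT3, map1_eq]
    have hK1 : ∀ a b : g × M,
        lift1 (vl : A2) base2 (PolynomialModule.map CD (LinearMap.inl CD g M)
            (B.br P.1 (a + b).1) +
          PolynomialModule.map CD (LinearMap.inr CD g M) (A.act P.1 (a + b).2)) =
        lift1 (vl : A2) base2 (PolynomialModule.map CD (LinearMap.inl CD g M) (B.br P.1 a.1) +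
          PolynomialModule.map CD (LinearMap.inr CD g M) (A.act P.1 a.2)) +
        lift1 (vl : A2) base2 (PolynomialModule.map CD (LinearMap.inl CD g M) (B.br P.1 b.1) +
          PolynomialModule.map CD (LinearMap.inr CD g M) (A.act P.1 b.2)) := by
      intro a b
      rw [Prod.fst_add, Prod.snd_add, B.add_right, A.add_right, map_add, map_add]
      simp only [lift1_base2_add]
      abel
    have hH : ∀ a b : g × M,
        lift1 (vl + vm : A2) base2 (PolynomialModule.map CD (LinearMap.inl CD g M)
            (B.br (a + b).1 Z.1) +
          PolynomialModule.map CD (LinearMap.inr CD g M) (A.act (a + b).1 Z.2)) =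
        lift1 (vl + vm : A2) base2
          (PolynomialModule.map CD (LinearMap.inl CD g M) (B.br a.1 Z.1) +
          PolynomialModule.map CD (LinearMap.inr CD g M) (A.act a.1 Z.2)) +
        lift1 (vl + vm : A2) base2
          (PolynomialModule.map CD (LinearMap.inl CD g M) (B.br b.1 Z.1) +
          PolynomialModule.map CD (LinearMap.inr CD g M) (A.act b.1 Z.2)) := by
      intro a b
      rw [Prod.fst_add, B.add_left, A.add_left, map_add, map_add]
      simp only [lift1_base2_add]
      abel
    have hK3 : ∀ a b : g × M,
        lift1 (vm : A2) base2 (PolynomialModule.map CD (LinearMap.inl CD g M)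
            (B.br Q.1 (a + b).1) +
          PolynomialModule.map CD (LinearMap.inr CD g M) (A.act Q.1 (a + b).2)) =
        lift1 (vm : A2) base2 (PolynomialModule.map CD (LinearMap.inl CD g M) (B.br Q.1 a.1) +
          PolynomialModule.map CD (LinearMap.inr CD g M) (A.act Q.1 a.2)) +
        lift1 (vm : A2) base2 (PolynomialModule.map CD (LinearMap.inl CD g M) (B.br Q.1 b.1) +
          PolynomialModule.map CD (LinearMap.inr CD g M) (A.act Q.1 b.2)) := by
      intro a b
      rw [Prod.fst_add, Prod.snd_add, B.add_right, A.add_right, map_add, map_add]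
      simp only [lift1_base2_add]
      abel
    rw [lift1_add vm _ hK1, lift1_mapCD (LinearMap.inl CD g M) vm _ hK1,
      lift1_mapCD (LinearMap.inr CD g M) vm _ hK1,
      lift1_add vl _ hH, lift1_mapCD (LinearMap.inl CD g M) vl _ hH,
      lift1_mapCD (LinearMap.inr CD g M) vl _ hH,
      lift1_add vl _ hK3, lift1_mapCD (LinearMap.inl CD g M) vl _ hK3,
      lift1_mapCD (LinearMap.inr CD g M) vl _ hK3]
    simp only [LinearMap.inl_apply, LinearMap.inr_apply, hactz_r, hactz_l, hbrz_l, hbrz_r,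
      map_zero, add_zero, zero_add, lift1_base2_add, lift1_map_base2, lift1_funadd,
      lift1_funzero, lift1_zero]
    rw [hjac2, hmod2]
    abel
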